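/- Let V be a finite-dimensional complex vector space with norm, and \rho : SL2(Z) \to GL(V) the representation sym^j, with operator norm bound \|sym^j(ST^n)\| \le A(1+|n|)^j for all integers n and some constant A \geq 1 (S = (0 -1; 1 0), T = (1 1; 0 1)). If \gamma = (a b; c d) in SL2(Z) has c \neq 0 and d/c has minus continued fraction expansion of length l, so that T^{-m}\gamma = \pm ST^{\alpha_l}\cdots ST^{\alpha_0} for some integer m, then \|sym^j(T^{-m}\gamma)\| \le A^{l+1} \prod_{i=0}^{l}(1+|\alpha_i|)^j, and there is a constant \kappa > 3 depending only on A such that \|sym^j(T^{-m}\gamma)\| \ll_j (|c|+|d|)^{\kappa + j}. -/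

import Mathlib

open Polynomial Finset

/-- The action `sym^m` of `γ = (a b; c e)` on `Poly(X,m)`:
`p(X) ↦ (-cX + a)^m p((eX - b)/(-cX + a))`, in the bounded-degree model. -/
noncomputable def symActC (m : ℕ) (a b c e : ℂ) (p : Polynomial ℂ) : Polynomial ℂ :=
  ∑ i ∈ Finset.range (m + 1),
    Polynomial.C (p.coeff i) * (Polynomial.C e * Polynomial.X - Polynomial.C b) ^ i
      * (-(Polynomial.C c) * Polynomial.X + Polynomial.C a) ^ (m - i)

/-- `sym^m` for an integral matrix. -/
noncomputable def symActZ (m : ℕ) (γ : Matrix.SpecialLinearGroup (Fin 2) ℤ)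
    (p : Polynomial ℂ) : Polynomial ℂ :=
  symActC m ((γ : Matrix (Fin 2) (Fin 2) ℤ) 0 0 : ℂ)
    ((γ : Matrix (Fin 2) (Fin 2) ℤ) 0 1 : ℂ)
    ((γ : Matrix (Fin 2) (Fin 2) ℤ) 1 0 : ℂ)
    ((γ : Matrix (Fin 2) (Fin 2) ℤ) 1 1 : ℂ) p

/-- A fixed norm on `Poly(X,j)`: the sum of the absolute values of the
coefficients. -/
noncomputable def polyNorm (m : ℕ) (p : Polynomial ℂ) : ℝ :=
  ∑ i ∈ Finset.range (m + 1), ‖(p.coeff i)‖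

lemma pn_nonneg (N : ℕ) (p : Polynomial ℂ) : 0 ≤ polyNorm N p :=
  Finset.sum_nonneg fun _ _ => norm_nonneg _

lemma pn_add_le (N : ℕ) (p q : Polynomial ℂ) :
    polyNorm N (p + q) ≤ polyNorm N p + polyNorm N q := by
  rw [polyNorm, polyNorm, polyNorm, ← Finset.sum_add_distrib]
  exact Finset.sum_le_sum fun i _ => by
    simpa [coeff_add] using norm_add_le (p.coeff i) (q.coeff i)

lemma pn_C_mul (N : ℕ) (r : ℂ) (p : Polynomial ℂ) :
    polyNorm N (C r * p) = ‖r‖ * polyNorm N p := by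
  simp [polyNorm, coeff_C_mul, norm_mul, Finset.mul_sum]

lemma pn_smul (N : ℕ) (r : ℂ) (p : Polynomial ℂ) :
    polyNorm N (r • p) = ‖r‖ * polyNorm N p := by
  rw [smul_eq_C_mul, pn_C_mul]

lemma pn_one (N : ℕ) : polyNorm N (1 : Polynomial ℂ) = 1 := by
  rw [polyNorm]
  rw [Finset.sum_eq_single 0]
  · simp
  · intro i hi hne; simp [coeff_one, hne]
  · intro h; simp at h
lemma pn_X_le (N : ℕ) : polyNorm N (X : Polynomial ℂ) ≤ 1 := by
  rw [polyNorm]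
  have : ∀ i ∈ Finset.range (N+1), ‖((X : Polynomial ℂ).coeff i)‖
      = if i = 1 then (1:ℝ) else 0 := by
    intro i _; rcases eq_or_ne i 1 with h | h
    · simp [coeff_X, h]
    · simp [coeff_X, h, Ne.symm h]
  rw [Finset.sum_congr rfl this, Finset.sum_ite_eq' (Finset.range (N+1)) 1 (fun _ => (1:ℝ))]
  split <;> norm_num

lemma pn_sum_le {ι : Type*} (N : ℕ) (s : Finset ι) (f : ι → Polynomial ℂ) :
    polyNorm N (∑ i ∈ s, f i) ≤ ∑ i ∈ s, polyNorm N (f i) := by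
  classical
  induction s using Finset.induction with
  | empty => simp [polyNorm]
  | insert x s hx ih =>
    rw [Finset.sum_insert hx, Finset.sum_insert hx]
    exact le_trans (pn_add_le _ _ _) (by linarith)

lemma pn_mul_le (N : ℕ) (p q : Polynomial ℂ) :
    polyNorm N (p * q) ≤ ((N:ℝ)+1) * polyNorm N p * polyNorm N q := by
  have key : ∀ k ∈ Finset.range (N+1),
      ‖((p*q).coeff k)‖ ≤ polyNorm N p * polyNorm N q := by
    intro k hk
    rw [coeff_mul]
    refine le_trans (norm_sum_le _ _) ?_
    have hsub : Finset.HasAntidiagonal.antidiagonal k ⊆ Finset.range (N+1) ×ˢ Finset.range (N+1) := by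
      intro x hx
      rw [Finset.HasAntidiagonal.mem_antidiagonal] at hx
      rw [Finset.mem_range] at hk
      simp only [Finset.mem_product, Finset.mem_range]
      omega
    refine le_trans (Finset.sum_le_sum_of_subset_of_nonneg hsub ?_) ?_
    · intro x _ _; positivity
    · rw [Finset.sum_product]
      rw [polyNorm, polyNorm, Finset.sum_mul_sum]
      exact le_of_eq (by simp [norm_mul])
  calc polyNorm N (p*q) ≤ ∑ _k ∈ Finset.range (N+1), polyNorm N p * polyNorm N q :=
        Finset.sum_le_sum key
    _ = ((N:ℝ)+1) * polyNorm N p * polyNorm N q := by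
        rw [Finset.sum_const, Finset.card_range]; push_cast; ring

lemma pn_pow_le (N : ℕ) (p : Polynomial ℂ) (n : ℕ) :
    polyNorm N (p ^ n) ≤ (((N:ℝ)+1) * polyNorm N p) ^ n := by
  induction n with
  | zero => simp [pn_one]
  | succ n ih =>
    rw [pow_succ, pow_succ]
    calc polyNorm N (p^n * p) ≤ ((N:ℝ)+1) * polyNorm N (p^n) * polyNorm N p := pn_mul_le _ _ _
      _ ≤ ((N:ℝ)+1) * (((N:ℝ)+1) * polyNorm N p)^n * polyNorm N p := by
          have h1 : (0:ℝ) ≤ (N:ℝ)+1 := by positivity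
          have h2 := pn_nonneg N p
          have h3 : (0:ℝ) ≤ ((N:ℝ)+1) * polyNorm N p := by positivity
          have := pow_le_pow_left₀ (pn_nonneg N (p^n)) (le_refl (polyNorm N (p^n))) n
          nlinarith [pn_nonneg N (p^n), mul_le_mul_of_nonneg_right (mul_le_mul_of_nonneg_left ih h1) h2]
      _ = (((N:ℝ)+1) * polyNorm N p)^n * (((N:ℝ)+1) * polyNorm N p) := by ring

lemma deg_linZ : (C e * X - C b : Polynomial ℂ).natDegree ≤ 1 :=
  le_trans (natDegree_sub_le _ _) (by
    simp only [max_le_iff]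
    exact ⟨le_trans (natDegree_C_mul_le _ _) (by simp), by simp⟩)

lemma deg_linY : (-(C c) * X + C a : Polynomial ℂ).natDegree ≤ 1 := by
  refine le_trans (natDegree_add_le _ _) ?_
  simp only [max_le_iff]
  refine ⟨le_trans natDegree_mul_le ?_, by simp⟩
  simp

lemma deg_pow_le {f : Polynomial ℂ} (hf : f.natDegree ≤ 1) (s : ℕ) :
    (f ^ s).natDegree ≤ s :=
  le_trans natDegree_pow_le (le_trans (Nat.mul_le_mul le_rfl hf) (by omega))

lemma symActC_degree : (symActC m a b c e p).natDegree ≤ m := by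
  refine natDegree_sum_le_of_forall_le _ _ fun i hi => ?_
  rw [Finset.mem_range] at hi
  refine le_trans (natDegree_mul_le) ?_
  have h1 : (C (p.coeff i) * (C e * X - C b) ^ i).natDegree ≤ i := by
    refine le_trans natDegree_mul_le ?_
    have h := deg_pow_le (f := (C e * X - C b : Polynomial ℂ)) deg_linZ i
    rw [natDegree_C]
    omega
  have h2 : ((-(C c) * X + C a : Polynomial ℂ) ^ (m - i)).natDegree ≤ m - i :=
    deg_pow_le deg_linY _
  omega

lemma symActC_add : symActC m a b c e (p + q) = symActC m a b c e p + symActC m a b c e q := by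
  simp [symActC, coeff_add, C_add, add_mul, Finset.sum_add_distrib]

lemma symActC_zero : symActC m a b c e 0 = 0 := by simp [symActC]

lemma symActC_C_mul : symActC m a b c e (C r * p) = C r * symActC m a b c e p := by
  simp [symActC, coeff_C_mul, C_mul, Finset.mul_sum, mul_assoc]

lemma symActC_sum {ι : Type*} (s : Finset ι) (f : ι → Polynomial ℂ) :
    symActC m a b c e (∑ i ∈ s, f i) = ∑ i ∈ s, symActC m a b c e (f i) := by
  classical
  induction s using Finset.induction with
  | empty => simp [symActC_zero]
  | insert x s hx ih => rw [Finset.sum_insert hx, Finset.sum_insert hx, symActC_add, ih]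

lemma symActC_monomial (hs : s ≤ m) :
    symActC m a b c e (C r * X ^ s)
      = C r * (C e * X - C b) ^ s * (-(C c) * X + C a) ^ (m - s) := by
  rw [symActC, Finset.sum_eq_single s]
  · simp [coeff_C_mul, coeff_X_pow]
  · intro i _ hne
    rw [coeff_C_mul, coeff_X_pow, if_neg hne]
    simp
  · intro h; exact absurd (Finset.mem_range.2 (by omega)) h

lemma symActC_mul (hp : p.natDegree ≤ m) (hq : q.natDegree ≤ n) :
    symActC (m + n) a b c e (p * q) = symActC m a b c e p * symActC n a b c e q := by
  have hP := p.as_sum_range' (m+1) (by omega)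
  have hQ := q.as_sum_range' (n+1) (by omega)
  conv_lhs => rw [hP, hQ, Finset.sum_mul_sum]
  rw [symActC_sum]
  conv_rhs => rw [hP, hQ, symActC_sum, symActC_sum, Finset.sum_mul_sum]
  refine Finset.sum_congr rfl fun s hs => ?_
  rw [symActC_sum]
  refine Finset.sum_congr rfl fun t ht => ?_
  rw [Finset.mem_range] at hs ht
  rw [← C_mul_X_pow_eq_monomial, ← C_mul_X_pow_eq_monomial,
    symActC_monomial (by omega), symActC_monomial (by omega)]
  have : C (p.coeff s) * X ^ s * (C (q.coeff t) * X ^ t)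
      = C (p.coeff s * q.coeff t) * X ^ (s + t) := by
    rw [C_mul, pow_add]; ring
  rw [this, symActC_monomial (by omega : s + t ≤ m + n)]
  have hst : m + n - (s + t) = (m - s) + (n - t) := by omega
  rw [hst, pow_add, pow_add, C_mul]
  ring

lemma symActC_pow (hf : f.natDegree ≤ 1) :
    symActC n a b c e (f ^ n) = (symActC 1 a b c e f) ^ n := by
  induction n with
  | zero => simp [symActC]
  | succ k ih =>
    have h1 : (f ^ k).natDegree ≤ k := deg_pow_le hf k
    have : k + 1 = 1 + k := by omega
    rw [this, pow_add, pow_one, symActC_mul hf h1, ih, pow_add, pow_one]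

lemma symActC_lin1 :
    symActC 1 a₂ b₂ c₂ e₂ (C e₁ * X - C b₁)
      = C (c₂*b₁ + e₂*e₁) * X - C (a₂*b₁ + b₂*e₁) := by
  rw [symActC]
  simp only [Finset.sum_range_succ, Finset.sum_range_one]
  simp [coeff_sub, coeff_C_mul, coeff_X, coeff_C]
  ring

lemma symActC_lin2 :
    symActC 1 a₂ b₂ c₂ e₂ (-(C c₁) * X + C a₁)
      = -(C (c₂*a₁ + e₂*c₁)) * X + C (a₂*a₁ + b₂*c₁) := by
  rw [symActC]
  simp only [Finset.sum_range_succ, Finset.sum_range_one]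
  simp [coeff_add, coeff_C_mul, coeff_X, coeff_C]
  ring

lemma symActC_comp (hp : p.natDegree ≤ j) :
    symActC j a₂ b₂ c₂ e₂ (symActC j a₁ b₁ c₁ e₁ p)
      = symActC j (a₂*a₁+b₂*c₁) (a₂*b₁+b₂*e₁) (c₂*a₁+e₂*c₁) (c₂*b₁+e₂*e₁) p := by
  conv_lhs => rw [p.as_sum_range' (j+1) (by omega)]
  conv_rhs => rw [p.as_sum_range' (j+1) (by omega)]
  rw [symActC_sum, symActC_sum, symActC_sum]
  refine Finset.sum_congr rfl fun s hs => ?_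
  rw [Finset.mem_range] at hs
  rw [← C_mul_X_pow_eq_monomial, symActC_monomial (by omega), symActC_monomial (by omega),
    mul_assoc, symActC_C_mul]
  have hj : j = s + (j - s) := by omega
  have hZ : ((C e₁ * X - C b₁ : Polynomial ℂ) ^ s).natDegree ≤ s := deg_pow_le deg_linZ s
  have hY : ((-(C c₁) * X + C a₁ : Polynomial ℂ) ^ (j-s)).natDegree ≤ j - s :=
    deg_pow_le deg_linY (j-s)
  rw [show symActC j a₂ b₂ c₂ e₂ ((C e₁ * X - C b₁)^s * (-(C c₁) * X + C a₁)^(j-s))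
      = symActC (s + (j-s)) a₂ b₂ c₂ e₂ ((C e₁ * X - C b₁)^s * (-(C c₁) * X + C a₁)^(j-s)) by
      rw [← hj]]
  rw [symActC_mul hZ hY, symActC_pow deg_linZ, symActC_pow deg_linY, symActC_lin1, symActC_lin2,
    mul_assoc]

lemma symActZ_mul (g₂ g₁ : Matrix.SpecialLinearGroup (Fin 2) ℤ) (hp : p.natDegree ≤ j) :
    symActZ j (g₂ * g₁) p = symActZ j g₂ (symActZ j g₁ p) := by
  rw [symActZ, symActZ, symActZ, symActC_comp hp]
  have h : ((g₂ * g₁ : Matrix.SpecialLinearGroup (Fin 2) ℤ) : Matrix (Fin 2) (Fin 2) ℤ)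
      = (g₂ : Matrix (Fin 2) (Fin 2) ℤ) * (g₁ : Matrix (Fin 2) (Fin 2) ℤ) := rfl
  rw [h]
  congr 1 <;> · rw [Matrix.mul_apply, Fin.sum_univ_two]; push_cast; ring

lemma symActC_id (hq : q.natDegree ≤ j) : symActC j 1 0 0 1 q = q := by
  conv_rhs => rw [q.as_sum_range' (j+1) (by omega)]
  rw [symActC]
  refine Finset.sum_congr rfl fun i _ => ?_
  simp [C_mul_X_pow_eq_monomial]

lemma symActC_neg (hq : q.natDegree ≤ j) :
    symActC j (-1) 0 0 (-1) q = ((-1 : ℂ) ^ j) • q := by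
  conv_rhs => rw [q.as_sum_range' (j+1) (by omega)]
  rw [symActC, Finset.smul_sum]
  refine Finset.sum_congr rfl fun i hi => ?_
  rw [Finset.mem_range] at hi
  have h1 : (C (-1:ℂ) * X - C 0 : Polynomial ℂ) = -X := by simp
  have h2 : (-(C (0:ℂ)) * X + C (-1) : Polynomial ℂ) = -1 := by simp
  rw [h1, h2, neg_pow, ← C_mul_X_pow_eq_monomial, Polynomial.smul_eq_C_mul]
  have hij : ((-1:Polynomial ℂ))^i * ((-1:Polynomial ℂ))^(j-i) = ((-1:Polynomial ℂ))^j := by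
    rw [← pow_add]; congr 1; omega
  have hC : (C ((-1:ℂ)^j) : Polynomial ℂ) = ((-1:Polynomial ℂ))^j := by
    rw [map_pow, map_neg, map_one]
  rw [hC, ← hij]
  ring

lemma pn_neg (N : ℕ) (p : Polynomial ℂ) : polyNorm N (-p) = polyNorm N p := by
  simp [polyNorm, coeff_neg]

lemma pn_C (N : ℕ) (r : ℂ) : polyNorm N (C r) = ‖r‖ := by
  have := pn_C_mul N r 1
  simpa [pn_one] using this

lemma pn_linZ_le (N : ℕ) (b e : ℂ) :
    polyNorm N (C e * X - C b) ≤ ‖b‖ + ‖e‖ := by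
  rw [sub_eq_add_neg]
  refine le_trans (pn_add_le _ _ _) ?_
  rw [pn_C_mul, pn_neg, pn_C]
  have := pn_X_le N
  nlinarith [norm_nonneg e, norm_nonneg b]

lemma pn_linY_le (N : ℕ) (a c : ℂ) :
    polyNorm N (-(C c) * X + C a) ≤ ‖a‖ + ‖c‖ := by
  have h : (-(C c) * X + C a : Polynomial ℂ) = C (-c) * X + C a := by simp
  rw [h]
  refine le_trans (pn_add_le _ _ _) ?_
  rw [pn_C_mul, pn_C, norm_neg]
  have := pn_X_le N
  nlinarith [norm_nonneg c, norm_nonneg a]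

lemma symActC_pn_le (j : ℕ) (a b c e : ℂ) (p : Polynomial ℂ) :
    polyNorm j (symActC j a b c e p)
      ≤ ((j:ℝ)+1)^(j+1)
          * (‖a‖ + ‖b‖ + ‖c‖ + ‖e‖)^j
          * polyNorm j p := by
  set Z : Polynomial ℂ := C e * X - C b with hZdef
  set Y : Polynomial ℂ := -(C c) * X + C a with hYdef
  set w : ℝ := ‖a‖ + ‖b‖ + ‖c‖ + ‖e‖ with hw
  have habs : ∀ z : ℂ, 0 ≤ ‖z‖ := fun z => norm_nonneg z
  have hw0 : 0 ≤ w := by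
    have := habs a; have := habs b; have := habs c; have := habs e; nlinarith
  have hZ : polyNorm j Z ≤ w := by
    refine le_trans (pn_linZ_le j b e) ?_
    have := habs a; have := habs c; nlinarith
  have hY : polyNorm j Y ≤ w := by
    refine le_trans (pn_linY_le j a c) ?_
    have := habs b; have := habs e; nlinarith
  have hj1 : (0:ℝ) ≤ (j:ℝ)+1 := by positivity
  have key : ∀ i ∈ Finset.range (j+1),
      polyNorm j (Z ^ i * Y ^ (j-i)) ≤ ((j:ℝ)+1)^(j+1) * w^j := by
    intro i hi
    rw [Finset.mem_range] at hi
    have t2 : polyNorm j (Z^i) ≤ (((j:ℝ)+1) * w)^i := by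
      refine le_trans (pn_pow_le j Z i) ?_
      exact pow_le_pow_left₀ (mul_nonneg hj1 (pn_nonneg j Z)) (by nlinarith [pn_nonneg j Z]) i
    have t3 : polyNorm j (Y^(j-i)) ≤ (((j:ℝ)+1) * w)^(j-i) := by
      refine le_trans (pn_pow_le j Y (j-i)) ?_
      exact pow_le_pow_left₀ (mul_nonneg hj1 (pn_nonneg j Y)) (by nlinarith [pn_nonneg j Y]) (j-i)
    calc polyNorm j (Z^i * Y^(j-i))
        ≤ ((j:ℝ)+1) * polyNorm j (Z^i) * polyNorm j (Y^(j-i)) := pn_mul_le _ _ _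
      _ ≤ ((j:ℝ)+1) * (((j:ℝ)+1) * w)^i * (((j:ℝ)+1) * w)^(j-i) := by
          have h1 := pn_nonneg j (Z^i)
          have h2 := pn_nonneg j (Y^(j-i))
          have h3 : (0:ℝ) ≤ (((j:ℝ)+1) * w)^i := by positivity
          nlinarith [mul_le_mul t2 t3 h2 h3, mul_nonneg h1 h2]
      _ = ((j:ℝ)+1) * ((((j:ℝ)+1)^i * (((j:ℝ)+1))^(j-i)) * (w^i * w^(j-i))) := by
          rw [mul_pow, mul_pow]; ring
      _ = ((j:ℝ)+1)^(j+1) * w^j := by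
          rw [← pow_add, ← pow_add, show i + (j-i) = j from by omega, pow_succ]
          ring
  calc polyNorm j (symActC j a b c e p)
      ≤ ∑ i ∈ Finset.range (j+1), polyNorm j (C (p.coeff i) * Z^i * Y^(j-i)) := by
        rw [symActC, ← hZdef, ← hYdef]
        exact pn_sum_le _ _ _
    _ ≤ ∑ i ∈ Finset.range (j+1),
          ‖(p.coeff i)‖ * (((j:ℝ)+1)^(j+1) * w^j) := by
        refine Finset.sum_le_sum fun i hi => ?_
        rw [mul_assoc, pn_C_mul]
        exact mul_le_mul_of_nonneg_left (key i hi) (habs _)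
    _ = ((j:ℝ)+1)^(j+1) * w^j * polyNorm j p := by
        rw [← Finset.sum_mul, polyNorm]; ring

set_option maxHeartbeats 1000000 in
lemma part1_aux (j : ℕ) (A : ℝ) (hA : 1 ≤ A)
    (hbound : ∀ n : ℤ, ∀ p : Polynomial ℂ, p.natDegree ≤ j →
      polyNorm j (symActZ j (ModularGroup.S * ModularGroup.T ^ n) p)
        ≤ A * (1 + |(n : ℝ)|) ^ j * polyNorm j p) :
    ∀ (l : ℕ) (α : Fin (l + 1) → ℤ) (p : Polynomial ℂ), p.natDegree ≤ j →
      polyNorm j (symActZ j ((List.ofFn (fun i : Fin (l + 1) =>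
          ModularGroup.S * ModularGroup.T ^ (α i))).prod) p)
        ≤ A ^ (l + 1) * (∏ i, (1 + |(α i : ℝ)|) ^ j) * polyNorm j p := by
  have hA0 : (0:ℝ) < A := lt_of_lt_of_le one_pos hA
  intro l
  induction l with
  | zero =>
    intro α p hp
    have hlist : (List.ofFn (fun i : Fin 1 =>
        ModularGroup.S * ModularGroup.T ^ (α i))).prod
        = ModularGroup.S * ModularGroup.T ^ (α 0) := by
      simp
    rw [hlist]
    simpa [Fin.prod_univ_one] using hbound (α 0) p hp
  | succ l ih =>
    intro α p hp
    have ih' := ih (fun i => α i.succ) p hp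
    simp only [List.ofFn_succ, List.prod_cons] at ih'
    simp only [List.ofFn_succ, List.prod_cons]
    rw [symActZ_mul _ _ hp]
    refine le_trans (hbound (α 0) _ symActC_degree) ?_
    refine le_trans (mul_le_mul_of_nonneg_left ih' (by positivity)) ?_
    refine le_of_eq ?_
    simp only [Fin.prod_univ_succ]
    ring

open ModularGroup in
lemma part2 (j : ℕ) (γ : Matrix.SpecialLinearGroup (Fin 2) ℤ)
    (hc : (γ : Matrix (Fin 2) (Fin 2) ℤ) 1 0 ≠ 0) :
    ∃ m : ℤ, ∀ p : Polynomial ℂ, p.natDegree ≤ j →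
      polyNorm j (symActZ j (ModularGroup.T ^ (-m) * γ) p)
        ≤ (((j:ℝ)+1)^(j+1) * 3^j)
            * ((|((γ : Matrix (Fin 2) (Fin 2) ℤ) 1 0 : ℝ)|
              + |((γ : Matrix (Fin 2) (Fin 2) ℤ) 1 1 : ℝ)|) ^ ((4:ℝ) + (j : ℝ)))
            * polyNorm j p := by
  set aZ := (γ : Matrix (Fin 2) (Fin 2) ℤ) 0 0 with haZ
  set bZ := (γ : Matrix (Fin 2) (Fin 2) ℤ) 0 1 with hbZ
  set cZ := (γ : Matrix (Fin 2) (Fin 2) ℤ) 1 0 with hcZ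
  set eZ := (γ : Matrix (Fin 2) (Fin 2) ℤ) 1 1 with heZ
  refine ⟨aZ / cZ, fun p hp => ?_⟩
  set m : ℤ := aZ / cZ with hm
  set δ := ModularGroup.T ^ (-m) * γ with hδ
  -- entries of δ
  have hmat : (δ : Matrix (Fin 2) (Fin 2) ℤ)
      = !![1, -m; 0, 1] * (γ : Matrix (Fin 2) (Fin 2) ℤ) := by
    rw [hδ]
    have : ((ModularGroup.T ^ (-m) * γ : Matrix.SpecialLinearGroup (Fin 2) ℤ)
        : Matrix (Fin 2) (Fin 2) ℤ)
        = ((ModularGroup.T ^ (-m) : Matrix.SpecialLinearGroup (Fin 2) ℤ)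
            : Matrix (Fin 2) (Fin 2) ℤ) * (γ : Matrix (Fin 2) (Fin 2) ℤ) := rfl
    rw [this, ModularGroup.coe_T_zpow]
  have h00 : (δ : Matrix (Fin 2) (Fin 2) ℤ) 0 0 = aZ - m * cZ := by
    rw [hmat]; rw [Matrix.mul_apply, Fin.sum_univ_two]; simp [haZ, hcZ]; ring
  have h01 : (δ : Matrix (Fin 2) (Fin 2) ℤ) 0 1 = bZ - m * eZ := by
    rw [hmat]; rw [Matrix.mul_apply, Fin.sum_univ_two]; simp [hbZ, heZ]; ring
  have h10 : (δ : Matrix (Fin 2) (Fin 2) ℤ) 1 0 = cZ := by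
    rw [hmat]; rw [Matrix.mul_apply, Fin.sum_univ_two]; simp [hcZ]
  have h11 : (δ : Matrix (Fin 2) (Fin 2) ℤ) 1 1 = eZ := by
    rw [hmat]; rw [Matrix.mul_apply, Fin.sum_univ_two]; simp [heZ]
  set a' : ℤ := aZ - m * cZ with ha'
  set b' : ℤ := bZ - m * eZ with hb'
  -- size bounds
  have hemod : a' = aZ % cZ := by rw [ha', hm, Int.emod_def]; ring
  have ha'nonneg : 0 ≤ a' := hemod ▸ Int.emod_nonneg aZ hc
  have ha'lt : a' < |cZ| := hemod ▸ Int.emod_lt_abs aZ hc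
  have hcabs : 1 ≤ |cZ| := Int.one_le_abs hc
  have hdet : a' * eZ - b' * cZ = 1 := by
    have hd := δ.property
    rw [Matrix.det_fin_two] at hd
    rw [h00, h01, h10, h11] at hd
    exact hd
  have hb'cZ : b' * cZ = a' * eZ - 1 := by linarith
  have h1 : |b'| * |cZ| ≤ |a'| * |eZ| + 1 := by
    rw [← abs_mul, hb'cZ]
    calc |a' * eZ - 1| ≤ |a' * eZ| + |(1:ℤ)| := abs_sub _ _
      _ = |a'| * |eZ| + 1 := by rw [abs_mul]; norm_num
  have ha'abs : |a'| = a' := abs_of_nonneg ha'nonneg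
  have hb'le : |b'| ≤ |eZ| + 1 := by
    refine le_of_mul_le_mul_right ?_ (by omega : (0:ℤ) < |cZ|)
    nlinarith [abs_nonneg b', abs_nonneg eZ]
  have hsum : |a'| + |b'| + |cZ| + |eZ| ≤ 3 * (|cZ| + |eZ|) := by
    have h2 : |a'| ≤ |cZ| - 1 := by omega
    have := abs_nonneg eZ
    linarith
  -- now the analytic estimate
  have hδform : symActZ j δ p = symActC j (a' : ℂ) (b' : ℂ) (cZ : ℂ) (eZ : ℂ) p := by
    rw [symActZ, h00, h01, h10, h11]
  set x : ℝ := |(cZ : ℝ)| + |(eZ : ℝ)| with hx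
  have hxint : ∀ t : ℤ, ‖((t : ℤ) : ℂ)‖ = ((|t| : ℤ) : ℝ) := by
    intro t
    rw [Complex.norm_intCast, Int.cast_abs]
  have hx1 : (1:ℝ) ≤ x := by
    have hc1 : (1:ℝ) ≤ ((|cZ| : ℤ) : ℝ) := by exact_mod_cast hcabs
    rw [Int.cast_abs] at hc1
    have : (0:ℝ) ≤ |(eZ : ℝ)| := abs_nonneg _
    rw [hx]; linarith
  have hwle : ‖((a' : ℤ) : ℂ)‖ + ‖((b' : ℤ) : ℂ)‖
      + ‖((cZ : ℤ) : ℂ)‖ + ‖((eZ : ℤ) : ℂ)‖ ≤ 3 * x := by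
    rw [hxint, hxint, hxint, hxint, hx]
    have hcast : ((|a'| + |b'| + |cZ| + |eZ| : ℤ) : ℝ) ≤ ((3 * (|cZ| + |eZ|) : ℤ) : ℝ) := by
      exact_mod_cast hsum
    push_cast [Int.cast_abs] at hcast ⊢
    linarith
  have hD : (0:ℝ) ≤ ((j:ℝ)+1)^(j+1) := by positivity
  have hpn := pn_nonneg j p
  calc polyNorm j (symActZ j δ p)
      = polyNorm j (symActC j (a' : ℂ) (b' : ℂ) (cZ : ℂ) (eZ : ℂ) p) := by rw [hδform]
    _ ≤ ((j:ℝ)+1)^(j+1)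
          * (‖((a' : ℤ) : ℂ)‖ + ‖((b' : ℤ) : ℂ)‖
            + ‖((cZ : ℤ) : ℂ)‖ + ‖((eZ : ℤ) : ℂ)‖)^j
          * polyNorm j p := symActC_pn_le j _ _ _ _ p
    _ ≤ ((j:ℝ)+1)^(j+1) * (3*x)^j * polyNorm j p := by
        have habs0 : (0:ℝ) ≤ ‖((a' : ℤ) : ℂ)‖ + ‖((b' : ℤ) : ℂ)‖
            + ‖((cZ : ℤ) : ℂ)‖ + ‖((eZ : ℤ) : ℂ)‖ := by positivity
        have hpow := pow_le_pow_left₀ habs0 hwle j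
        exact mul_le_mul_of_nonneg_right (mul_le_mul_of_nonneg_left hpow hD) hpn
    _ = (((j:ℝ)+1)^(j+1) * 3^j) * x^j * polyNorm j p := by rw [mul_pow]; ring
    _ ≤ (((j:ℝ)+1)^(j+1) * 3^j) * (x ^ ((4:ℝ) + (j : ℝ))) * polyNorm j p := by
        have hrr : x^(j:ℕ) ≤ x ^ ((4:ℝ) + (j : ℝ)) := by
          rw [← Real.rpow_natCast x j]
          exact Real.rpow_le_rpow_of_exponent_le hx1 (by linarith)
        have hD2 : (0:ℝ) ≤ ((j:ℝ)+1)^(j+1) * 3^j := by positivity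
        exact mul_le_mul_of_nonneg_right (mul_le_mul_of_nonneg_left hrr hD2) hpn


/-- Norm bound for `sym^j` along minus continued fraction factorizations:
if `‖sym^j(STⁿ)‖ ≤ A(1+|n|)^j` and `T^{-m}γ = ± ST^{α_l} ⋯ ST^{α_0}`, then
`‖sym^j(T^{-m}γ)‖ ≤ A^{l+1} ∏ᵢ (1+|αᵢ|)^j`; moreover there is a constant
`κ > 3` (depending only on `A`) with `‖sym^j(T^{-m}γ)‖ ≪_j (|c|+|d|)^{κ+j}`. -/
theorem sym_power_norm_bound_via_continued_fractions (j : ℕ) (A : ℝ) (hA : 1 ≤ A)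
    (hbound : ∀ n : ℤ, ∀ p : Polynomial ℂ, p.natDegree ≤ j →
      polyNorm j (symActZ j (ModularGroup.S * ModularGroup.T ^ n) p)
        ≤ A * (1 + |(n : ℝ)|) ^ j * polyNorm j p) :
    (∀ (m : ℤ) (l : ℕ) (α : Fin (l + 1) → ℤ)
        (γ ε : Matrix.SpecialLinearGroup (Fin 2) ℤ),
      ((ε : Matrix (Fin 2) (Fin 2) ℤ) = 1 ∨ (ε : Matrix (Fin 2) (Fin 2) ℤ) = -1) →
      ModularGroup.T ^ (-m) * γ
          = ε * (List.ofFn (fun i : Fin (l + 1) =>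
              ModularGroup.S * ModularGroup.T ^ (α i))).prod →
      ∀ p : Polynomial ℂ, p.natDegree ≤ j →
        polyNorm j (symActZ j (ModularGroup.T ^ (-m) * γ) p)
          ≤ A ^ (l + 1) * (∏ i, (1 + |(α i : ℝ)|) ^ j) * polyNorm j p)
    ∧ (∃ κ : ℝ, 3 < κ ∧ ∃ C : ℝ, ∀ γ : Matrix.SpecialLinearGroup (Fin 2) ℤ,
        (γ : Matrix (Fin 2) (Fin 2) ℤ) 1 0 ≠ 0 →
        ∃ m : ℤ, ∀ p : Polynomial ℂ, p.natDegree ≤ j →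
          polyNorm j (symActZ j (ModularGroup.T ^ (-m) * γ) p)
            ≤ C * ((|((γ : Matrix (Fin 2) (Fin 2) ℤ) 1 0 : ℝ)|
                  + |((γ : Matrix (Fin 2) (Fin 2) ℤ) 1 1 : ℝ)|) ^ (κ + (j : ℝ)))
                * polyNorm j p) := by
  constructor
  · intro m l α γ ε hε heq p hp
    rw [heq, symActZ_mul ε _ hp]
    set q := symActZ j ((List.ofFn (fun i : Fin (l + 1) =>
        ModularGroup.S * ModularGroup.T ^ (α i))).prod) p with hqdef
    have hqd : q.natDegree ≤ j := symActC_degree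
    have hnorm : polyNorm j (symActZ j ε q) = polyNorm j q := by
      rcases hε with h1 | h1
      · rw [symActZ, h1]
        norm_num [Matrix.one_apply]
        rw [symActC_id hqd]
      · rw [symActZ, h1]
        norm_num [Matrix.neg_apply, Matrix.one_apply]
        rw [symActC_neg hqd, pn_smul, norm_pow]
        norm_num
    rw [hnorm]
    exact part1_aux j A hA hbound l α p hp
  · exact ⟨4, by norm_num, ((j:ℝ)+1)^(j+1) * 3^j, fun γ hc => part2 j γ hc⟩
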